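/- Let Y be a metric space and X a separable metric space. Let y ↦ K_y be a map from Y into the family of nonempty compact subsets of X. Suppose that for every sequence y_n → y in Y and every choice of points x_n ∈ K_{y_n}, the sequence (x_n) has a limit point belonging to K_y (i.e., a subsequence converging to a point of K_y). Then the map y ↦ K_y is Borel measurable from Y into the space of nonempty compact subsets of X endowed with the Hausdorff metric. -/

import Mathlib

open TopologicalSpace Filter
open scoped ENNReal

section Aux

open EMetric Set

variable {Y X : Type*} [MetricSpace Y] [MetricSpace X]

/-- Sub-level sets of `y ↦ infEdist a (K y)` are closed. -/
theorem sv_aux_infEdist_closed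
    (K : Y → NonemptyCompacts X)
    (hK : ∀ (y : ℕ → Y) (ylim : Y), Tendsto y atTop (nhds ylim) →
      ∀ x : ℕ → X, (∀ n, x n ∈ (K (y n) : Set X)) →
        ∃ z ∈ (K ylim : Set X), ∃ φ : ℕ → ℕ, StrictMono φ ∧
          Tendsto (x ∘ φ) atTop (nhds z))
    (a : X) (c : ℝ≥0∞) :
    IsClosed {y | infEdist a (K y : Set X) ≤ c} := by
  refine IsSeqClosed.isClosed ?_
  intro u y hu huy
  have hx : ∀ n, ∃ x ∈ (K (u n) : Set X), infEdist a (K (u n) : Set X) = edist a x :=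
    fun n => (K (u n)).isCompact.exists_infEdist_eq_edist (K (u n)).nonempty a
  choose x hxm hxe using hx
  obtain ⟨z, hz, φ, hφ, hzx⟩ := hK u y huy x hxm
  have h1 : Tendsto (fun n => edist a ((x ∘ φ) n)) atTop (nhds (edist a z)) :=
    ((continuous_const.edist continuous_id).tendsto z).comp hzx
  have h2 : edist a z ≤ c := by
    refine le_of_tendsto h1 (Eventually.of_forall fun n => ?_)
    have := hu (φ n)
    simp only [Set.mem_setOf_eq] at this
    calc edist a (x (φ n)) = infEdist a (K (u (φ n)) : Set X) := (hxe (φ n)).symm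
    _ ≤ c := this
  exact le_trans (infEdist_le_edist_of_mem hz) h2

/-- Super-level sets of `y ↦ ⨆ x ∈ K y, infEdist x A` are closed. -/
theorem sv_aux_sup_closed
    (K : Y → NonemptyCompacts X)
    (hK : ∀ (y : ℕ → Y) (ylim : Y), Tendsto y atTop (nhds ylim) →
      ∀ x : ℕ → X, (∀ n, x n ∈ (K (y n) : Set X)) →
        ∃ z ∈ (K ylim : Set X), ∃ φ : ℕ → ℕ, StrictMono φ ∧
          Tendsto (x ∘ φ) atTop (nhds z))
    (A : Set X) (c : ℝ≥0∞) :
    IsClosed {y | c ≤ ⨆ x ∈ (K y : Set X), infEdist x A} := by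
  refine IsSeqClosed.isClosed ?_
  intro u y hu huy
  have hx : ∀ n, ∃ x ∈ (K (u n) : Set X), ∀ w ∈ (K (u n) : Set X),
      infEdist w A ≤ infEdist x A :=
    fun n => by
      obtain ⟨x, hx, hmax⟩ := (K (u n)).isCompact.exists_isMaxOn (K (u n)).nonempty
        continuous_infEdist.continuousOn
      exact ⟨x, hx, fun w hw => hmax hw⟩
  choose x hxm hxe using hx
  obtain ⟨z, hz, φ, hφ, hzx⟩ := hK u y huy x hxm
  have h1 : Tendsto (fun n => infEdist ((x ∘ φ) n) A) atTop (nhds (infEdist z A)) :=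
    (continuous_infEdist.tendsto z).comp hzx
  have h2 : c ≤ infEdist z A := by
    refine ge_of_tendsto h1 (Eventually.of_forall fun n => ?_)
    have hun := hu (φ n)
    simp only [Set.mem_setOf_eq] at hun
    calc c ≤ ⨆ w ∈ (K (u (φ n)) : Set X), infEdist w A := hun
    _ ≤ infEdist (x (φ n)) A := by
        exact iSup₂_le fun w hw => hxe (φ n) w hw
  exact h2.trans (le_iSup₂ (f := fun w (_ : w ∈ (K y : Set X)) => infEdist w A) z hz)

/-- Measurability of `y ↦ hausdorffEdist (K y) A`. -/
theorem sv_aux_hausdorffEdist_measurable [MeasurableSpace Y] [BorelSpace Y]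
    (K : Y → NonemptyCompacts X)
    (hK : ∀ (y : ℕ → Y) (ylim : Y), Tendsto y atTop (nhds ylim) →
      ∀ x : ℕ → X, (∀ n, x n ∈ (K (y n) : Set X)) →
        ∃ z ∈ (K ylim : Set X), ∃ φ : ℕ → ℕ, StrictMono φ ∧
          Tendsto (x ∘ φ) atTop (nhds z))
    (A : NonemptyCompacts X) :
    Measurable fun y => hausdorffEdist (K y : Set X) (A : Set X) := by
  have m1 : Measurable fun y => ⨆ x ∈ (K y : Set X), infEdist x (A : Set X) := by
    apply measurable_of_Iio
    intro c
    have h : (fun y => ⨆ x ∈ (K y : Set X), infEdist x (A : Set X)) ⁻¹' Iio c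
        = {y | c ≤ ⨆ x ∈ (K y : Set X), infEdist x (A : Set X)}ᶜ := by
      ext y; simp [not_le]
    rw [h]
    exact (sv_aux_sup_closed K hK (A : Set X) c).measurableSet.compl
  have m2 : Measurable fun y => ⨆ a ∈ (A : Set X), infEdist a (K y : Set X) := by
    apply measurable_of_Iic
    intro c
    have h : (fun y => ⨆ a ∈ (A : Set X), infEdist a (K y : Set X)) ⁻¹' Iic c
        = ⋂ a ∈ (A : Set X), {y | infEdist a (K y : Set X) ≤ c} := by
      ext y; simp [iSup₂_le_iff]
    rw [h]
    exact (isClosed_biInter fun a _ => sv_aux_infEdist_closed K hK a c).measurableSet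
  have h : (fun y => hausdorffEdist (K y : Set X) (A : Set X))
      = fun y => (⨆ x ∈ (K y : Set X), infEdist x (A : Set X))
          ⊔ ⨆ a ∈ (A : Set X), infEdist a (K y : Set X) := by
    funext y; exact hausdorffEdist_def _ _
  rw [h]
  exact m1.sup m2

end Aux

/-- Stroock–Varadhan measurability lemma, Lemma 3.9 of the paper:
if `y ↦ K_y` maps a metric space `Y` into the nonempty compact subsets of a
separable metric space `X`, and whenever `y_n → y` and `x_n ∈ K_{y_n}` the
sequence `(x_n)` has a subsequence converging to a point of `K_y`, then
`y ↦ K_y` is Borel measurable for the Hausdorff metric. -/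
theorem stroock_varadhan_measurability
    {Y X : Type*} [MetricSpace Y] [MetricSpace X] [SeparableSpace X]
    [MeasurableSpace Y] [BorelSpace Y]
    [MeasurableSpace (NonemptyCompacts X)] [BorelSpace (NonemptyCompacts X)]
    (K : Y → NonemptyCompacts X)
    (hK : ∀ (y : ℕ → Y) (ylim : Y), Tendsto y atTop (nhds ylim) →
      ∀ x : ℕ → X, (∀ n, x n ∈ (K (y n) : Set X)) →
        ∃ z ∈ (K ylim : Set X), ∃ φ : ℕ → ℕ, StrictMono φ ∧
          Tendsto (x ∘ φ) atTop (nhds z)) :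
    Measurable K := by
  haveI : SecondCountableTopology X := UniformSpace.secondCountable_of_separable X
  have hedist : ∀ (s t : NonemptyCompacts X),
      edist s t = EMetric.hausdorffEdist (s : Set X) (t : Set X) := fun _ _ => rfl
  refine measurable_of_isOpen fun U hU => ?_
  obtain ⟨S, Scount, Sdense⟩ := TopologicalSpace.exists_countable_dense (NonemptyCompacts X)
  set T : Set (NonemptyCompacts X × ℚ) :=
    {p | p.1 ∈ S ∧ Metric.eball p.1 (ENNReal.ofReal p.2) ⊆ U} with hT
  have Tcount : T.Countable := by
    refine (Scount.prod (Set.countable_univ (α := ℚ))).mono fun p hp => ?_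
    rw [hT, Set.mem_setOf_eq] at hp
    exact Set.mem_prod.2 ⟨hp.1, trivial⟩
  have hcover : K ⁻¹' U = ⋃ p ∈ T, K ⁻¹' Metric.eball p.1 (ENNReal.ofReal p.2) := by
    ext y
    simp only [Set.mem_preimage, Set.mem_iUnion, exists_prop]
    constructor
    · intro hy
      obtain ⟨ε, εpos, hball⟩ := EMetric.isOpen_iff.1 hU (K y) hy
      have hhalf : (0 : ℝ≥0∞) < ε / 2 := ENNReal.half_pos εpos.ne'
      obtain ⟨q, hq0, hq1, hq2⟩ := ENNReal.lt_iff_exists_rat_btwn.1 hhalf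
      have hr0 : (0 : ℝ≥0∞) < ENNReal.ofReal (q : ℝ) := by
        rw [ENNReal.ofReal]; exact hq1
      have hrε : ENNReal.ofReal (q : ℝ) < ε / 2 := by
        rw [ENNReal.ofReal]; exact hq2
      obtain ⟨A, hAS, hAd⟩ := EMetric.mem_closure_iff.1 (Sdense.closure_eq ▸
        (Set.mem_univ (K y) : K y ∈ Set.univ) : K y ∈ closure S) _ hr0
      have hmem : (A, q) ∈ T := by
        rw [hT, Set.mem_setOf_eq]
        refine ⟨hAS, fun C hC => ?_⟩
        apply hball
        have hCA : edist C A < ENNReal.ofReal (q : ℝ) := Metric.mem_eball.1 hC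
        have : edist C (K y) < ε := by
          calc edist C (K y) ≤ edist C A + edist A (K y) := edist_triangle _ _ _
          _ < ENNReal.ofReal (q : ℝ) + ENNReal.ofReal (q : ℝ) := by
              refine ENNReal.add_lt_add hCA ?_
              rw [edist_comm]; exact hAd
          _ < ε / 2 + ε / 2 := ENNReal.add_lt_add hrε hrε
          _ = ε := ENNReal.add_halves ε
        exact Metric.mem_eball.2 this
      exact ⟨(A, q), hmem, Metric.mem_eball.2 hAd⟩
    · rintro ⟨p, ⟨_, hsub⟩, hy⟩
      exact hsub hy
  rw [hcover]
  refine MeasurableSet.biUnion Tcount fun p _ => ?_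
  have h : K ⁻¹' Metric.eball p.1 (ENNReal.ofReal (p.2 : ℝ))
      = (fun y => EMetric.hausdorffEdist (K y : Set X) (p.1 : Set X)) ⁻¹'
          Set.Iio (ENNReal.ofReal (p.2 : ℝ)) := by
    ext y
    simp only [Set.mem_preimage, Metric.mem_eball, Set.mem_Iio, hedist]
  rw [h]
  exact sv_aux_hausdorffEdist_measurable K hK p.1 measurableSet_Iio
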